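/- Let (E, sim, ser) be a comtrace alphabet. A step sequence u is maximally concurrent if and only if u is canonical. -/

import Mathlib

variable {E : Type*}

/-- A step over a comtrace alphabet `(E, sim, ser)`: a nonempty finite set of events,
pairwise related by `sim`. -/
def IsStep [DecidableEq E] (sim : E → E → Prop) (A : Finset E) : Prop :=
  A.Nonempty ∧ ∀ a ∈ A, ∀ b ∈ A, a ≠ b → sim a b

/-- A step sequence: a finite list of steps. -/
def IsStepSeq [DecidableEq E] (sim : E → E → Prop) (u : List (Finset E)) : Prop :=
  ∀ A ∈ u, IsStep sim A

/-- The generating relation of comtrace congruence: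
`w·A·z ≈ w·B·C·z` whenever `A`, `B`, `C` are steps with `B ∪ C = A` and `B × C ⊆ ser`. -/
def CTBase [DecidableEq E] (sim ser : E → E → Prop) (u v : List (Finset E)) : Prop :=
  ∃ (w z : List (Finset E)) (A B C : Finset E),
    IsStepSeq sim w ∧ IsStepSeq sim z ∧
    IsStep sim A ∧ IsStep sim B ∧ IsStep sim C ∧
    B ∪ C = A ∧ (∀ b ∈ B, ∀ c ∈ C, ser b c) ∧
    u = w ++ A :: z ∧ v = w ++ B :: C :: z

/-- The least equivalence relation containing `base`. -/
def LeastEquiv {α : Type*} (base : α → α → Prop) (x y : α) : Prop :=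
  ∀ c : α → α → Prop, Equivalence c → (∀ a b, base a b → c a b) → c x y

/-- Comtrace congruence: the least equivalence relation containing `CTBase`. -/
def CTEquiv [DecidableEq E] (sim ser : E → E → Prop) :
    List (Finset E) → List (Finset E) → Prop :=
  LeastEquiv (CTBase sim ser)

/-- Forward dependency on steps: `(A, B) ∈ FD` iff there is a step `C ⊆ B` with
`A × C ⊆ ser` and `C × (B \ C) ⊆ ser`. -/
def FD [DecidableEq E] (sim ser : E → E → Prop) (A B : Finset E) : Prop :=
  ∃ C : Finset E, IsStep sim C ∧ C ⊆ B ∧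
    (∀ a ∈ A, ∀ c ∈ C, ser a c) ∧ (∀ c ∈ C, ∀ b ∈ B \ C, ser c b)

/-- A step sequence `A₁…A_k` is canonical iff `(Aᵢ, Aᵢ₊₁) ∉ FD` for all `1 ≤ i < k`. -/
def Canonical [DecidableEq E] (sim ser : E → E → Prop) (u : List (Finset E)) : Prop :=
  u.Chain' (fun A B => ¬ FD sim ser A B)

/-- `X_j` is maximally concurrent in `x` (0-indexed): every step sequence `B·y`
congruent to the suffix `x.drop j` satisfies `|B| ≤ |X_j|`. -/
def MaxConcAt [DecidableEq E] (sim ser : E → E → Prop) (x : List (Finset E))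
    (j : ℕ) : Prop :=
  ∃ h : j < x.length, ∀ (B : Finset E) (y : List (Finset E)),
    IsStep sim B → IsStepSeq sim y → CTEquiv sim ser (B :: y) (x.drop j) →
    B.card ≤ (x.get ⟨j, h⟩).card

/-- `mcIdx x` is the smallest index `j` such that the `j`-th step is maximally
concurrent in `x`. -/
noncomputable def mcIdx [DecidableEq E] (sim ser : E → E → Prop)
    (x : List (Finset E)) : ℕ :=
  sInf {j | MaxConcAt sim ser x j}

/-- A step sequence `u` is maximally concurrent iff (1) it has minimal length in its
congruence class, and (2) each suffix of `u` has minimal `mcIdx` among congruent step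
sequences of the same length. -/
def MaximallyConcurrent [DecidableEq E] (sim ser : E → E → Prop)
    (u : List (Finset E)) : Prop :=
  (∀ v, IsStepSeq sim v → CTEquiv sim ser u v → u.length ≤ v.length) ∧
  (∀ i < u.length, ∀ w, IsStepSeq sim w → CTEquiv sim ser (u.drop i) w →
    (u.drop i).length = w.length →
    mcIdx sim ser (u.drop i) ≤ mcIdx sim ser w)

set_option linter.unusedSectionVars false
set_option linter.unusedVariables false
set_option linter.unnecessarySeqFocus false
set_option maxHeartbeats 1000000

open Relation

namespace CTAux

/-- Two decompositions of one list, each marking two adjacent cells. -/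
theorem decomp {α : Type*} {p₁ p₂ q₁ q₂ : List α} {a₁ b₁ a₂ b₂ : α}
    (h : p₁ ++ a₁ :: b₁ :: q₁ = p₂ ++ a₂ :: b₂ :: q₂) (hle : p₁.length ≤ p₂.length) :
    (p₁ = p₂ ∧ a₁ = a₂ ∧ b₁ = b₂ ∧ q₁ = q₂) ∨
    (p₂ = p₁ ++ [a₁] ∧ b₁ = a₂ ∧ q₁ = b₂ :: q₂) ∨
    (∃ r, p₂ = p₁ ++ a₁ :: b₁ :: r ∧ q₁ = r ++ a₂ :: b₂ :: q₂) := by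
  induction p₁ generalizing p₂ with
  | nil =>
    match p₂ with
    | [] => simp_all
    | [x] =>
      simp only [List.nil_append, List.cons_append, List.cons.injEq] at h
      exact Or.inr (Or.inl ⟨by simp [h.1], h.2.1, h.2.2⟩)
    | x :: y :: r =>
      simp only [List.nil_append, List.cons_append, List.cons.injEq] at h
      exact Or.inr (Or.inr ⟨r, by simp [h.1, h.2.1], h.2.2⟩)
  | cons x p₁ ih =>
    match p₂ with
    | [] => simp at hle
    | y :: p₂ =>
      simp only [List.cons_append, List.cons.injEq] at h
      obtain ⟨rfl, h2⟩ := h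
      simp only [List.length_cons, Nat.succ_le_succ_iff] at hle
      rcases ih h2 hle with ⟨rfl, h⟩ | ⟨h1, h⟩ | ⟨r, h1, h⟩
      · exact Or.inl ⟨rfl, h⟩
      · exact Or.inr (Or.inl ⟨by simp [h1], h⟩)
      · exact Or.inr (Or.inr ⟨r, by simp [h1], h⟩)


variable [DecidableEq E] {sim ser : E → E → Prop}

def SR (ser : E → E → Prop) (X Y : Finset E) : Prop := ∀ a ∈ X, ∀ b ∈ Y, ser a b

def sdl (B C : Finset E) : List (Finset E) := if B = C then [] else [B \ C]

def Rstep (ser : E → E → Prop) (u v : List (Finset E)) : Prop :=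
  ∃ (p q : List (Finset E)) (A B C : Finset E),
    C.Nonempty ∧ C ⊆ B ∧ SR ser A C ∧ SR ser C (B \ C) ∧
    u = p ++ A :: B :: q ∧ v = p ++ (A ∪ C) :: (sdl B C ++ q)

theorem SR.mono {X Y X' Y' : Finset E} (h : SR ser X Y) (hX : X' ⊆ X) (hY : Y' ⊆ Y) :
    SR ser X' Y' := fun a ha b hb => h a (hX ha) b (hY hb)

theorem SR.disj (hsim_irr : ∀ a, ¬ sim a a) (hser_sub : ∀ a b, ser a b → sim a b)
    {X Y : Finset E} (h : SR ser X Y) : Disjoint X Y := by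
  rw [Finset.disjoint_left]
  intro a ha ha'
  exact hsim_irr a (hser_sub a a (h a ha a ha'))

theorem mk {p q : List (Finset E)} {A B C : Finset E}
    (h1 : C.Nonempty) (h2 : C ⊆ B) (h3 : SR ser A C) (h4 : SR ser C (B \ C)) :
    Rstep ser (p ++ A :: B :: q) (p ++ (A ∪ C) :: (sdl B C ++ q)) :=
  ⟨p, q, A, B, C, h1, h2, h3, h4, rfl, rfl⟩


/-- Same-position: one more move absorbing `C₂` as well. -/
theorem samepos {p q : List (Finset E)} {A B C₁ C₂ : Finset E}
    (h1 : C₁.Nonempty) (h2 : C₁ ⊆ B) (h3 : SR ser A C₁) (h4 : SR ser C₁ (B \ C₁))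
    (h2' : C₂ ⊆ B) (h3' : SR ser A C₂) (h4' : SR ser C₂ (B \ C₂)) :
    ReflTransGen (Rstep ser) (p ++ (A ∪ C₁) :: (sdl B C₁ ++ q))
      (p ++ (A ∪ (C₁ ∪ C₂)) :: (sdl B (C₁ ∪ C₂) ++ q)) := by
  by_cases hsub : C₂ ⊆ C₁
  · rw [Finset.union_eq_left.mpr hsub]
  · have hne : (C₂ \ C₁).Nonempty := by rwa [Finset.sdiff_nonempty]
    have hBC₁ : B ≠ C₁ := by rintro rfl; exact hsub h2'
    have hsdl : sdl B C₁ = [B \ C₁] := if_neg hBC₁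
    rw [hsdl]
    have e1 : (A ∪ C₁) ∪ (C₂ \ C₁) = A ∪ (C₁ ∪ C₂) := by
      ext x
      simp only [Finset.mem_union, Finset.mem_sdiff]
      tauto
    have e2 : sdl (B \ C₁) (C₂ \ C₁) = sdl B (C₁ ∪ C₂) := by
      have m1 : ∀ x, x ∈ C₁ → x ∈ B := fun _ hx => h2 hx
      have m2 : ∀ x, x ∈ C₂ → x ∈ B := fun _ hx => h2' hx
      by_cases hB : B = C₁ ∪ C₂
      · have : B \ C₁ = C₂ \ C₁ := by
          ext x
          simp only [Finset.mem_sdiff]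
          constructor
          · rintro ⟨hxB, hx1⟩
            rw [hB] at hxB
            simp only [Finset.mem_union] at hxB
            exact ⟨hxB.resolve_left hx1, hx1⟩
          · rintro ⟨hx2, hx1⟩; exact ⟨m2 x hx2, hx1⟩
        rw [sdl, sdl, if_pos this, if_pos hB]
      · have hne2 : B \ C₁ ≠ C₂ \ C₁ := by
          intro heq
          apply hB
          ext x
          simp only [Finset.mem_union]
          constructor
          · intro hxB
            by_cases hx1 : x ∈ C₁
            · exact Or.inl hx1
            · have : x ∈ C₂ \ C₁ := heq ▸ (Finset.mem_sdiff.mpr ⟨hxB, hx1⟩)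
              exact Or.inr (Finset.mem_sdiff.mp this).1
          · rintro (hx | hx)
            · exact m1 x hx
            · exact m2 x hx
        rw [sdl, sdl, if_neg hne2, if_neg hB]
        congr 1
        ext x
        simp only [Finset.mem_sdiff, Finset.mem_union]
        tauto
    refine ReflTransGen.single ?_
    have step := mk (ser := ser) (p := p) (q := q) hne
      (Finset.sdiff_subset_sdiff h2' (le_refl _))
      (by
        intro a ha b hb
        rcases Finset.mem_union.mp ha with h | h
        · exact h3' a h b (Finset.mem_sdiff.mp hb).1
        · exact h4 a h b (Finset.sdiff_subset_sdiff h2' (le_refl _) hb))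
      (by
        intro a ha b hb
        have haC₂ : a ∈ C₂ := (Finset.mem_sdiff.mp ha).1
        have hb' : b ∈ B \ C₂ := by
          simp only [Finset.mem_sdiff] at ha hb ⊢
          refine ⟨hb.1.1, fun hbC₂ => hb.2 ⟨hbC₂, hb.1.2⟩⟩
        exact h4' a haC₂ b hb')
    rw [e1, e2] at step
    exact step

def W (l : List (Finset E)) : ℕ := (l.map Finset.card).sum

def m : List (Finset E) → ℕ
  | [] => 0
  | _ :: l => W l + m l

@[simp] theorem W_nil : W ([] : List (Finset E)) = 0 := rfl
@[simp] theorem W_cons (A : Finset E) (l) : W (A :: l) = A.card + W l := rfl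
theorem W_append (p l : List (Finset E)) : W (p ++ l) = W p + W l := by
  induction p with
  | nil => simp
  | cons A p ih => simp [ih]; ring

@[simp] theorem m_nil : m ([] : List (Finset E)) = 0 := rfl
@[simp] theorem m_cons (A : Finset E) (l) : m (A :: l) = W l + m l := rfl

theorem m_append (p l : List (Finset E)) :
    m (p ++ l) = m p + p.length * W l + m l := by
  induction p with
  | nil => simp
  | cons A p ih => simp [W_append, ih]; ring

theorem Rstep.m_lt (hsim_irr : ∀ a, ¬ sim a a) (hser_sub : ∀ a b, ser a b → sim a b)
    {u v : List (Finset E)} (h : Rstep ser u v) : m v < m u := by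
  obtain ⟨p, q, A, B, C, hCne, hCB, hAC, hCB', hu, hv⟩ := h
  have hdisjAC : Disjoint A C := SR.disj hsim_irr hser_sub hAC
  have hcardAC : (A ∪ C).card = A.card + C.card := Finset.card_union_of_disjoint hdisjAC
  have hCpos : 0 < C.card := Finset.card_pos.mpr hCne
  subst hu hv
  rw [m_append, m_append]
  by_cases hBC : B = C
  · subst hBC
    have hq : sdl B B ++ q = q := by simp [sdl]
    rw [hq]
    simp only [m_cons, W_cons, hcardAC, List.length_cons]
    have hprod : A.card + B.card + W q = A.card + (B.card + W q) := by ring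
    rw [hprod]
    have hBpos : 0 < B.card := hCpos
    omega
  · have hq : sdl B C ++ q = (B \ C) :: q := by simp [sdl, hBC]
    rw [hq]
    have hcards : (B \ C).card = B.card - C.card := Finset.card_sdiff_of_subset hCB
    have hle : C.card ≤ B.card := Finset.card_le_card hCB
    simp only [m_cons, W_cons, hcardAC, hcards, List.length_cons]
    have hprod : A.card + C.card + (B.card - C.card + W q) = A.card + (B.card + W q) := by
      omega
    rw [hprod]
    omega






end CTAux

namespace CTAux

variable [DecidableEq E] {sim ser : E → E → Prop}

theorem adjacent (hsim_irr : ∀ a, ¬ sim a a) (hser_sub : ∀ a b, ser a b → sim a b)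
    {p q : List (Finset E)} {A B D C₁ C₂ : Finset E}
    (h1 : C₁.Nonempty) (h2 : C₁ ⊆ B) (h3 : SR ser A C₁) (h4 : SR ser C₁ (B \ C₁))
    (g1 : C₂.Nonempty) (g2 : C₂ ⊆ D) (g3 : SR ser B C₂) (g4 : SR ser C₂ (D \ C₂)) :
    ∃ d, ReflTransGen (Rstep ser) (p ++ (A ∪ C₁) :: (sdl B C₁ ++ (D :: q))) d ∧
      ReflTransGen (Rstep ser) (p ++ A :: (B ∪ C₂) :: (sdl D C₂ ++ q)) d := by
  have hdBC₂ : Disjoint B C₂ := SR.disj hsim_irr hser_sub g3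
  have hnotin : ∀ x ∈ C₂, x ∉ B := fun x hx hxB =>
    (Finset.disjoint_left.mp hdBC₂) hxB hx
  by_cases hC1B : B = C₁
  · subst hC1B
    refine ⟨p ++ (A ∪ B) :: D :: q, ?_, ?_⟩
    · rw [show sdl B B = [] from if_pos rfl, List.nil_append]
    · -- from v₂, reach d in one or two steps
      have hBne : B ∪ C₂ ≠ B := by
        intro h
        obtain ⟨x, hx⟩ := g1
        exact hnotin x hx (h ▸ Finset.mem_union_right _ hx)
      have hsd2 : (B ∪ C₂) \ B = C₂ := by
        ext x
        simp only [Finset.mem_sdiff, Finset.mem_union]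
        exact ⟨fun ⟨h, h'⟩ => h.resolve_left h', fun h => ⟨Or.inr h, hnotin x h⟩⟩
      have step1 : Rstep ser (p ++ A :: (B ∪ C₂) :: (sdl D C₂ ++ q))
          (p ++ (A ∪ B) :: (C₂ :: (sdl D C₂ ++ q))) := by
        have := mk (ser := ser) (p := p) (q := sdl D C₂ ++ q)
          h1 Finset.subset_union_left h3
          (g3.mono (le_refl _) (by rw [hsd2]))
        rwa [show sdl (B ∪ C₂) B = [C₂] by rw [sdl, if_neg hBne, hsd2],
          List.singleton_append] at this
      by_cases hDC₂ : D = C₂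
      · subst hDC₂
        rw [show sdl D D = [] from if_pos rfl, List.nil_append] at step1 ⊢
        exact ReflTransGen.single step1
      · have hsdD : sdl D C₂ = [D \ C₂] := if_neg hDC₂
        rw [hsdD, List.singleton_append] at step1 ⊢
        have hDCne : (D \ C₂).Nonempty := by
          rw [Finset.sdiff_nonempty]
          intro hsub
          exact hDC₂ (le_antisymm hsub g2)
        have step2 : Rstep ser (p ++ (A ∪ B) :: C₂ :: (D \ C₂) :: q)
            (p ++ (A ∪ B) :: D :: q) := by
          have := mk (ser := ser) (p := p ++ [A ∪ B]) (q := q)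
            (A := C₂) (B := D \ C₂) (C := D \ C₂)
            hDCne (le_refl _) g4 (by intro a ha b hb; simp at hb)
          rw [show sdl (D \ C₂) (D \ C₂) = [] from if_pos rfl, List.nil_append,
            Finset.union_sdiff_of_subset g2] at this
          simpa using this
        exact ReflTransGen.head step1 (ReflTransGen.single step2)
  · have hsdB : sdl B C₁ = [B \ C₁] := if_neg hC1B
    have hC₁C₂ : ∀ x ∈ C₂, x ∉ C₁ := fun x hx hx1 => hnotin x hx (h2 hx1)
    refine ⟨p ++ (A ∪ C₁) :: ((B \ C₁) ∪ C₂) :: (sdl D C₂ ++ q), ?_, ?_⟩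
    · rw [hsdB, List.singleton_append]
      refine ReflTransGen.single ?_
      have := mk (ser := ser) (p := p ++ [A ∪ C₁]) (q := q)
        (A := B \ C₁) (B := D) (C := C₂)
        g1 g2 (g3.mono Finset.sdiff_subset (le_refl _)) g4
      simpa using this
    · refine ReflTransGen.single ?_
      have hBCne : B ∪ C₂ ≠ C₁ := by
        intro h
        obtain ⟨x, hx⟩ := g1
        exact hC₁C₂ x hx (h ▸ Finset.mem_union_right _ hx)
      have hsd : (B ∪ C₂) \ C₁ = (B \ C₁) ∪ C₂ := by
        ext x
        simp only [Finset.mem_sdiff, Finset.mem_union]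
        constructor
        · rintro ⟨h | h, hx1⟩
          · exact Or.inl ⟨h, hx1⟩
          · exact Or.inr h
        · rintro (⟨hxB, hx1⟩ | hx)
          · exact ⟨Or.inl hxB, hx1⟩
          · exact ⟨Or.inr hx, hC₁C₂ x hx⟩
      have := mk (ser := ser) (p := p) (q := sdl D C₂ ++ q)
        (A := A) (B := B ∪ C₂) (C := C₁)
        h1 (h2.trans Finset.subset_union_left) h3
        (by
          rw [hsd]
          intro a ha b hb
          rcases Finset.mem_union.mp hb with h | h
          · exact h4 a ha b h
          · exact g3 a (h2 ha) b h)
      rwa [show sdl (B ∪ C₂) C₁ = [(B \ C₁) ∪ C₂] by rw [sdl, if_neg hBCne, hsd],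
        List.singleton_append] at this


theorem locConfCore (hsim_irr : ∀ a, ¬ sim a a) (hser_sub : ∀ a b, ser a b → sim a b)
    {p₁ q₁ p₂ q₂ : List (Finset E)} {A₁ B₁ A₂ B₂ C₁ C₂ : Finset E}
    (hle : p₁.length ≤ p₂.length)
    (hu : p₁ ++ A₁ :: B₁ :: q₁ = p₂ ++ A₂ :: B₂ :: q₂)
    (c11 : C₁.Nonempty) (c12 : C₁ ⊆ B₁) (c13 : SR ser A₁ C₁) (c14 : SR ser C₁ (B₁ \ C₁))
    (c21 : C₂.Nonempty) (c22 : C₂ ⊆ B₂) (c23 : SR ser A₂ C₂) (c24 : SR ser C₂ (B₂ \ C₂)) :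
    ∃ d, ReflTransGen (Rstep ser) (p₁ ++ (A₁ ∪ C₁) :: (sdl B₁ C₁ ++ q₁)) d ∧
      ReflTransGen (Rstep ser) (p₂ ++ (A₂ ∪ C₂) :: (sdl B₂ C₂ ++ q₂)) d := by
  rcases decomp hu hle with ⟨rfl, rfl, rfl, rfl⟩ | ⟨hp, hb, hq⟩ | ⟨r, hp, hq⟩
  · refine ⟨p₁ ++ (A₁ ∪ (C₁ ∪ C₂)) :: (sdl B₁ (C₁ ∪ C₂) ++ q₁), ?_, ?_⟩
    · exact samepos c11 c12 c13 c14 c22 c23 c24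
    · have := samepos (p := p₁) (q := q₁) c21 c22 c23 c24 c12 c13 c14
      rwa [Finset.union_comm C₂ C₁] at this
  · subst hp hb hq
    obtain ⟨d, hd1, hd2⟩ := adjacent hsim_irr hser_sub (p := p₁) (q := q₂)
      c11 c12 c13 c14 c21 c22 c23 c24
    exact ⟨d, hd1, by simpa using hd2⟩
  · subst hp hq
    refine ⟨p₁ ++ (A₁ ∪ C₁) :: (sdl B₁ C₁ ++ (r ++ (A₂ ∪ C₂) :: (sdl B₂ C₂ ++ q₂))), ?_, ?_⟩
    · refine ReflTransGen.single ?_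
      have := mk (ser := ser) (p := p₁ ++ (A₁ ∪ C₁) :: (sdl B₁ C₁ ++ r)) (q := q₂)
        c21 c22 c23 c24
      simpa using this
    · refine ReflTransGen.single ?_
      have := mk (ser := ser) (p := p₁) (q := r ++ (A₂ ∪ C₂) :: (sdl B₂ C₂ ++ q₂))
        c11 c12 c13 c14
      simpa using this

theorem locConf (hsim_irr : ∀ a, ¬ sim a a) (hser_sub : ∀ a b, ser a b → sim a b)
    {u v₁ v₂ : List (Finset E)} (h₁ : Rstep ser u v₁) (h₂ : Rstep ser u v₂) :
    ∃ d, ReflTransGen (Rstep ser) v₁ d ∧ ReflTransGen (Rstep ser) v₂ d := by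
  obtain ⟨p₁, q₁, A₁, B₁, C₁, c11, c12, c13, c14, hu₁, rfl⟩ := h₁
  obtain ⟨p₂, q₂, A₂, B₂, C₂, c21, c22, c23, c24, hu₂, rfl⟩ := h₂
  have hu : p₁ ++ A₁ :: B₁ :: q₁ = p₂ ++ A₂ :: B₂ :: q₂ := hu₁.symm.trans hu₂
  rcases le_total p₁.length p₂.length with hle | hle
  · exact locConfCore hsim_irr hser_sub hle hu c11 c12 c13 c14 c21 c22 c23 c24
  · obtain ⟨d, hd1, hd2⟩ :=
      locConfCore hsim_irr hser_sub hle hu.symm c21 c22 c23 c24 c11 c12 c13 c14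
    exact ⟨d, hd2, hd1⟩

theorem conf (hsim_irr : ∀ a, ¬ sim a a) (hser_sub : ∀ a b, ser a b → sim a b) :
    ∀ (n : ℕ) (u b c : List (Finset E)), m u ≤ n →
      ReflTransGen (Rstep ser) u b → ReflTransGen (Rstep ser) u c →
      ∃ d, ReflTransGen (Rstep ser) b d ∧ ReflTransGen (Rstep ser) c d := by
  intro n
  induction n with
  | zero =>
    intro u b c hm hb hc
    rcases hb.cases_head with rfl | ⟨b₁, hub₁, _⟩
    · exact ⟨c, hc, ReflTransGen.refl⟩
    · have := Rstep.m_lt hsim_irr hser_sub hub₁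
      omega
  | succ n ih =>
    intro u b c hm hb hc
    rcases hb.cases_head with rfl | ⟨b₁, hub₁, hb₁b⟩
    · exact ⟨c, hc, ReflTransGen.refl⟩
    rcases hc.cases_head with rfl | ⟨c₁, huc₁, hc₁c⟩
    · exact ⟨b, ReflTransGen.refl, hb⟩
    obtain ⟨e, he₁, he₂⟩ := locConf hsim_irr hser_sub hub₁ huc₁
    have hmb₁ : m b₁ ≤ n := by
      have := Rstep.m_lt hsim_irr hser_sub hub₁; omega
    have hmc₁ : m c₁ ≤ n := by
      have := Rstep.m_lt hsim_irr hser_sub huc₁; omega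
    obtain ⟨f, hf₁, hf₂⟩ := ih b₁ b e hmb₁ hb₁b he₁
    obtain ⟨g, hg₁, hg₂⟩ := ih c₁ c f hmc₁ hc₁c (he₂.trans hf₂)
    exact ⟨g, hf₁.trans hg₂, hg₁⟩


theorem ct_refl (u : List (Finset E)) : CTEquiv sim ser u u :=
  fun _ hc _ => hc.refl u

theorem ct_symm {u v : List (Finset E)} (h : CTEquiv sim ser u v) :
    CTEquiv sim ser v u := fun c hc hb =>
  h (fun a b => c b a)
    ⟨fun x => hc.refl x, fun h1 => hc.symm h1, fun h1 h2 => hc.trans h2 h1⟩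
    (fun a b hab => hc.symm (hb a b hab))

theorem ct_trans {u v w : List (Finset E)} (h1 : CTEquiv sim ser u v)
    (h2 : CTEquiv sim ser v w) : CTEquiv sim ser u w :=
  fun c hc hb => hc.trans (h1 c hc hb) (h2 c hc hb)

theorem ct_of_base {u v : List (Finset E)} (h : CTBase sim ser u v) :
    CTEquiv sim ser u v := fun c hc hb => hb u v h

theorem ct_inv {P : List (Finset E) → Prop}
    (hP : ∀ a b, CTBase sim ser a b → (P a ↔ P b))
    {u v : List (Finset E)} (h : CTEquiv sim ser u v) : P u ↔ P v :=
  h (fun a b => (P a ↔ P b)) ⟨fun _ => Iff.rfl, Iff.symm, Iff.trans⟩ hP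

theorem ct_W (hsim_irr : ∀ a, ¬ sim a a) (hser_sub : ∀ a b, ser a b → sim a b)
    {u v : List (Finset E)} (h : CTEquiv sim ser u v) : W u = W v := by
  have := ct_inv (P := fun l => W l = W u) ?_ h
  · exact (this.mp rfl).symm
  · intro a b hab
    obtain ⟨w, z, A, B, C, _, _, _, _, _, hBC, hser, rfl, rfl⟩ := hab
    have hdisj : Disjoint B C := SR.disj hsim_irr hser_sub hser
    have : A.card = B.card + C.card := by
      rw [← hBC, Finset.card_union_of_disjoint hdisj]
    simp only [W_append, W_cons, this]
    constructor <;> (intro h'; omega)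

theorem ct_stepseq {u v : List (Finset E)} (h : CTEquiv sim ser u v) :
    IsStepSeq sim u ↔ IsStepSeq sim v := by
  refine ct_inv ?_ h
  intro a b hab
  obtain ⟨w, z, A, B, C, hw, hz, hA, hB, hC, _, _, rfl, rfl⟩ := hab
  constructor <;> intro _ X hX
  · simp only [List.mem_append, List.mem_cons] at hX
    rcases hX with h | h | h | h
    · exact hw X h
    · exact h ▸ hB
    · exact h ▸ hC
    · exact hz X h
  · simp only [List.mem_append, List.mem_cons] at hX
    rcases hX with h | h | h
    · exact hw X h
    · exact h ▸ hA
    · exact hz X h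

theorem ct_ne_nil {u v : List (Finset E)} (h : CTEquiv sim ser u v) :
    u = [] ↔ v = [] := by
  refine ct_inv (P := fun l => l = []) ?_ h
  intro a b hab
  obtain ⟨w, z, A, B, C, _, _, _, _, _, _, _, rfl, rfl⟩ := hab
  constructor <;> intro h' <;> exact absurd h' (by simp)

theorem rstep_stepseq (hsim_symm : ∀ a b, sim a b → sim b a)
    (hser_sub : ∀ a b, ser a b → sim a b) {u v : List (Finset E)}
    (h : Rstep ser u v) (hu : IsStepSeq sim u) : IsStepSeq sim v := by
  obtain ⟨p, q, A, B, C, hCne, hCB, hAC, hCB', rfl, rfl⟩ := h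
  have hA : IsStep sim A := hu A (by simp)
  have hB : IsStep sim B := hu B (by simp)
  have hAUC : IsStep sim (A ∪ C) := by
    refine ⟨Finset.Nonempty.mono Finset.subset_union_left hA.1, ?_⟩
    intro a ha b hb hne
    rcases Finset.mem_union.mp ha with ha | ha <;> rcases Finset.mem_union.mp hb with hb | hb
    · exact hA.2 a ha b hb hne
    · exact hser_sub a b (hAC a ha b hb)
    · exact hsim_symm b a (hser_sub b a (hAC b hb a ha))
    · exact hB.2 a (hCB ha) b (hCB hb) hne
  intro X hX
  simp only [List.mem_append, List.mem_cons] at hX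
  rcases hX with h | h | h
  · exact hu X (by simp [h])
  · exact h ▸ hAUC
  · rcases h with h | h
    · rw [sdl] at h
      split at h
      · simp at h
      · simp only [List.mem_singleton] at h
        subst h
        refine ⟨?_, fun a ha b hb hne => hB.2 a (Finset.mem_sdiff.mp ha).1
          b (Finset.mem_sdiff.mp hb).1 hne⟩
        rw [Finset.sdiff_nonempty]
        intro hsub
        exact (by assumption : ¬ B = C) (le_antisymm hsub hCB)
  
    · exact hu X (by simp [h])

theorem rstep_ctequiv (hsim_symm : ∀ a b, sim a b → sim b a)
    (hser_sub : ∀ a b, ser a b → sim a b) {u v : List (Finset E)}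
    (h : Rstep ser u v) (hu : IsStepSeq sim u) : CTEquiv sim ser u v := by
  obtain ⟨p, q, A, B, C, hCne, hCB, hAC, hCB', rfl, rfl⟩ := h
  have hp : IsStepSeq sim p := fun X hX => hu X (by simp [hX])
  have hq : IsStepSeq sim q := fun X hX => hu X (by simp [hX])
  have hA : IsStep sim A := hu A (by simp)
  have hB : IsStep sim B := hu B (by simp)
  have hC : IsStep sim C :=
    ⟨hCne, fun a ha b hb hne => hB.2 a (hCB ha) b (hCB hb) hne⟩
  have hAUC : IsStep sim (A ∪ C) := by
    refine ⟨Finset.Nonempty.mono Finset.subset_union_left hA.1, ?_⟩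
    intro a ha b hb hne
    rcases Finset.mem_union.mp ha with ha | ha <;> rcases Finset.mem_union.mp hb with hb | hb
    · exact hA.2 a ha b hb hne
    · exact hser_sub a b (hAC a ha b hb)
    · exact hsim_symm b a (hser_sub b a (hAC b hb a ha))
    · exact hC.2 a ha b hb hne
  by_cases hBC : B = C
  · -- merge: single base step (split of A∪B into A,B), reversed
    subst hBC
    rw [show sdl B B = [] from if_pos rfl, List.nil_append]
    refine ct_symm (ct_of_base ?_)
    exact ⟨p, q, A ∪ B, A, B, hp, hq, hAUC, hA, hB, rfl, hAC, rfl, rfl⟩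
  · rw [show sdl B C = [B \ C] from if_neg hBC, List.singleton_append]
    have hBdC : IsStep sim (B \ C) := by
      refine ⟨?_, fun a ha b hb hne => hB.2 a (Finset.mem_sdiff.mp ha).1
        b (Finset.mem_sdiff.mp hb).1 hne⟩
      rw [Finset.sdiff_nonempty]
      intro hsub
      exact hBC (le_antisymm hsub hCB)
    have h1 : CTEquiv sim ser (p ++ A :: B :: q) (p ++ A :: C :: (B \ C) :: q) := by
      refine ct_of_base ?_
      refine ⟨p ++ [A], q, B, C, B \ C, ?_, hq, hB, hC, hBdC,
        Finset.union_sdiff_of_subset hCB, hCB', by simp, by simp⟩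
      intro X hX
      rcases List.mem_append.mp hX with h | h
      · exact hp X h
      · simp only [List.mem_singleton] at h; exact h ▸ hA
    have h2 : CTEquiv sim ser (p ++ (A ∪ C) :: (B \ C) :: q) (p ++ A :: C :: (B \ C) :: q) := by
      refine ct_of_base ?_
      exact ⟨p, (B \ C) :: q, A ∪ C, A, C, hp,
        (fun X hX => by
          rcases List.mem_cons.mp hX with h | h
          · exact h ▸ hBdC
          · exact hq X h), hAUC, hA, hC, rfl, hAC, rfl, rfl⟩
    exact ct_trans h1 (ct_symm h2)

theorem rtg_ctequiv (hsim_symm : ∀ a b, sim a b → sim b a)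
    (hser_sub : ∀ a b, ser a b → sim a b) {u v : List (Finset E)}
    (h : ReflTransGen (Rstep ser) u v) (hu : IsStepSeq sim u) :
    CTEquiv sim ser u v ∧ IsStepSeq sim v := by
  induction h with
  | refl => exact ⟨ct_refl u, hu⟩
  | tail h' step ih =>
    exact ⟨ct_trans ih.1 (rstep_ctequiv hsim_symm hser_sub step ih.2),
      rstep_stepseq hsim_symm hser_sub step ih.2⟩

theorem ctequiv_join (hsim_irr : ∀ a, ¬ sim a a) (hser_sub : ∀ a b, ser a b → sim a b)
    {u v : List (Finset E)} (h : CTEquiv sim ser u v) :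
    ∃ d, ReflTransGen (Rstep ser) u d ∧ ReflTransGen (Rstep ser) v d := by
  refine h (fun a b => ∃ d, ReflTransGen (Rstep ser) a d ∧ ReflTransGen (Rstep ser) b d)
    ⟨fun a => ⟨a, ReflTransGen.refl, ReflTransGen.refl⟩,
     fun ⟨d, h1, h2⟩ => ⟨d, h2, h1⟩,
     ?_⟩ ?_
  · rintro a b c ⟨x, hax, hbx⟩ ⟨y, hby, hcy⟩
    obtain ⟨z, hxz, hyz⟩ := conf hsim_irr hser_sub (m b) b x y (le_refl _) hbx hby
    exact ⟨z, hax.trans hxz, hcy.trans hyz⟩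
  · rintro a b ⟨w, z, A, B, C, hw, hz, hA, hB, hC, hBC, hser, rfl, rfl⟩
    refine ⟨w ++ A :: z, ReflTransGen.refl, ReflTransGen.single ?_⟩
    have := mk (ser := ser) (p := w) (q := z) (A := B) (B := C) (C := C)
      hC.1 (le_refl _) hser (by intro a ha b hb; simp at hb)
    rwa [show sdl C C = [] from if_pos rfl, List.nil_append, hBC] at this

end CTAux

namespace CTAux

variable [DecidableEq E] {sim ser : E → E → Prop}

theorem to_nf (hsim_irr : ∀ a, ¬ sim a a) (hser_sub : ∀ a b, ser a b → sim a b) :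
    ∀ (n : ℕ) (u : List (Finset E)), m u ≤ n →
      ∃ c, ReflTransGen (Rstep ser) u c ∧ ∀ v, ¬ Rstep ser c v := by
  intro n
  induction n with
  | zero =>
    intro u hm
    refine ⟨u, ReflTransGen.refl, fun v hv => ?_⟩
    have := Rstep.m_lt hsim_irr hser_sub hv
    omega
  | succ n ih =>
    intro u hm
    by_cases h : ∃ v, Rstep ser u v
    · obtain ⟨v, hv⟩ := h
      have := Rstep.m_lt hsim_irr hser_sub hv
      obtain ⟨c, hc1, hc2⟩ := ih v (by omega)
      exact ⟨c, ReflTransGen.head hv hc1, hc2⟩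
    · exact ⟨u, ReflTransGen.refl, fun v hv => h ⟨v, hv⟩⟩

theorem nf_rtg_eq {c d : List (Finset E)} (hnf : ∀ v, ¬ Rstep ser c v)
    (h : ReflTransGen (Rstep ser) c d) : d = c := by
  rcases h.cases_head with rfl | ⟨v, hv, _⟩
  · rfl
  · exact absurd hv (hnf v)

theorem rstep_length {u v : List (Finset E)} (h : Rstep ser u v) :
    v.length ≤ u.length := by
  obtain ⟨p, q, A, B, C, _, _, _, _, rfl, rfl⟩ := h
  simp only [List.length_append, List.length_cons, sdl]
  split <;> simp <;> omega

theorem rtg_length {u v : List (Finset E)} (h : ReflTransGen (Rstep ser) u v) :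
    v.length ≤ u.length := by
  induction h with
  | refl => exact le_refl _
  | tail _ step ih => exact (rstep_length step).trans ih

theorem rstep_head {u v : List (Finset E)} (h : Rstep ser u v) :
    ∃ X u' Y v', u = X :: u' ∧ v = Y :: v' ∧ X ⊆ Y := by
  obtain ⟨p, q, A, B, C, _, _, _, _, rfl, rfl⟩ := h
  cases p with
  | nil => exact ⟨A, B :: q, A ∪ C, sdl B C ++ q, rfl, rfl, Finset.subset_union_left⟩
  | cons x p => exact ⟨x, _, x, _, rfl, rfl, le_refl _⟩

theorem rtg_head {u v : List (Finset E)} (h : ReflTransGen (Rstep ser) u v) :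
    ∀ X u', u = X :: u' → ∃ Y v', v = Y :: v' ∧ X ⊆ Y := by
  induction h with
  | refl => exact fun X u' h => ⟨X, u', h, le_refl _⟩
  | tail _ step ih =>
    intro X u' hu
    obtain ⟨Y, v', rfl, hXY⟩ := ih X u' hu
    obtain ⟨X₂, u₂, Y₂, v₂, heq, hv, hsub⟩ := rstep_head step
    obtain ⟨rfl, rfl⟩ : X₂ = Y ∧ u₂ = v' := by
      rw [List.cons.injEq] at heq; exact ⟨heq.1.symm, heq.2.symm⟩
    exact ⟨Y₂, v₂, hv, hXY.trans hsub⟩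

theorem not_chain'_decomp {α : Type*} {R : α → α → Prop} :
    ∀ {l : List α}, ¬ l.Chain' R → ∃ p a b q, l = p ++ a :: b :: q ∧ ¬ R a b := by
  intro l
  induction l with
  | nil => intro h; exact absurd List.isChain_nil h
  | cons x l ih =>
    intro h
    cases l with
    | nil => exact absurd (List.isChain_singleton x) h
    | cons y l =>
      rw [List.Chain', List.isChain_cons_cons] at h
      by_cases hxy : R x y
      · have : ¬ (y :: l).Chain' R := fun hc => h ⟨hxy, hc⟩
        obtain ⟨p, a, b, q, heq, hab⟩ := ih this
        exact ⟨x :: p, a, b, q, by rw [heq]; rfl, hab⟩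
      · exact ⟨[], x, y, l, rfl, hxy⟩

theorem fd_to_rstep {A B : Finset E} (p q : List (Finset E)) (h : FD sim ser A B) :
    ∃ v, Rstep ser (p ++ A :: B :: q) v := by
  obtain ⟨C, hCstep, hCB, h1, h2⟩ := h
  exact ⟨_, mk hCstep.1 hCB h1 h2⟩

theorem not_canonical_rstep {u : List (Finset E)} (h : ¬ Canonical sim ser u) :
    ∃ v, Rstep ser u v := by
  obtain ⟨p, A, B, q, rfl, hAB⟩ := not_chain'_decomp h
  exact fd_to_rstep p q (not_not.mp hAB)

theorem nf_canonical {u : List (Finset E)} (h : ∀ v, ¬ Rstep ser u v) :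
    Canonical sim ser u := by
  by_contra hc
  obtain ⟨v, hv⟩ := not_canonical_rstep hc
  exact h v hv

theorem canonical_nf {u : List (Finset E)} (hu : IsStepSeq sim u)
    (hc : Canonical sim ser u) : ∀ v, ¬ Rstep ser u v := by
  intro v hv
  obtain ⟨p, q, A, B, C, hCne, hCB, hAC, hCB', rfl, _⟩ := hv
  have hB : IsStep sim B := hu B (by simp)
  have hRAB : ¬ FD sim ser A B := by
    have hinf : [A, B] <:+: p ++ A :: B :: q := ⟨p, q, by simp⟩
    have := (hc.infix hinf)
    exact (List.isChain_cons_cons.mp this).1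
  exact hRAB ⟨C, ⟨hCne, fun a ha b hb hne => hB.2 a (hCB ha) b (hCB hb) hne⟩,
    hCB, hAC, hCB'⟩

theorem exists_canonical (hsim_irr : ∀ a, ¬ sim a a)
    (hsim_symm : ∀ a b, sim a b → sim b a) (hser_sub : ∀ a b, ser a b → sim a b)
    {s : List (Finset E)} (hs : IsStepSeq sim s) :
    ∃ c, IsStepSeq sim c ∧ Canonical sim ser c ∧ CTEquiv sim ser s c := by
  obtain ⟨c, hc1, hc2⟩ := to_nf hsim_irr hser_sub (m s) s (le_refl _)
  obtain ⟨heq, hss⟩ := rtg_ctequiv hsim_symm hser_sub hc1 hs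
  exact ⟨c, hss, nf_canonical hc2, heq⟩

theorem canonical_min_length (hsim_irr : ∀ a, ¬ sim a a)
    (hser_sub : ∀ a b, ser a b → sim a b) {x v : List (Finset E)}
    (hx : IsStepSeq sim x) (hc : Canonical sim ser x)
    (h : CTEquiv sim ser v x) : x.length ≤ v.length := by
  obtain ⟨d, hvd, hxd⟩ := ctequiv_join hsim_irr hser_sub h
  rw [nf_rtg_eq (canonical_nf hx hc) hxd] at hvd
  exact rtg_length hvd

theorem canonical_head_max (hsim_irr : ∀ a, ¬ sim a a)
    (hser_sub : ∀ a b, ser a b → sim a b) {X : Finset E} {x' : List (Finset E)}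
    (hx : IsStepSeq sim (X :: x')) (hc : Canonical sim ser (X :: x'))
    {B : Finset E} {y : List (Finset E)} (h : CTEquiv sim ser (B :: y) (X :: x')) :
    B ⊆ X := by
  obtain ⟨d, hvd, hxd⟩ := ctequiv_join hsim_irr hser_sub h
  rw [nf_rtg_eq (canonical_nf hx hc) hxd] at hvd
  obtain ⟨Y, v', heq, hsub⟩ := rtg_head hvd B y rfl
  rw [List.cons.injEq] at heq
  exact heq.1 ▸ hsub

end CTAux

namespace CTAux

variable [DecidableEq E] {sim ser : E → E → Prop}

theorem ct_append_left {p a b : List (Finset E)} (hp : IsStepSeq sim p)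
    (h : CTEquiv sim ser a b) : CTEquiv sim ser (p ++ a) (p ++ b) := by
  refine h (fun x y => CTEquiv sim ser (p ++ x) (p ++ y))
    ⟨fun x => ct_refl _, ct_symm, ct_trans⟩ ?_
  rintro x y ⟨w, z, A, B, C, hw, hz, hA, hB, hC, hBC, hser, rfl, rfl⟩
  refine ct_of_base ⟨p ++ w, z, A, B, C, ?_, hz, hA, hB, hC, hBC, hser, by simp, by simp⟩
  intro X hX
  rcases List.mem_append.mp hX with h | h
  · exact hp X h
  · exact hw X h

theorem maxconc_last (hsim_irr : ∀ a, ¬ sim a a) (hser_sub : ∀ a b, ser a b → sim a b)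
    {s : List (Finset E)} (hne : s ≠ []) : MaxConcAt sim ser s (s.length - 1) := by
  have hpos : 0 < s.length := List.length_pos_iff.mpr hne
  have hlt : s.length - 1 < s.length := by omega
  refine ⟨hlt, ?_⟩
  intro B y hB hy hequiv
  have hdrop : s.drop (s.length - 1) = [s.get ⟨s.length - 1, hlt⟩] := by
    rw [List.drop_eq_getElem_cons hlt, show s.length - 1 + 1 = s.length by omega,
      List.drop_length]
    simp [List.get_eq_getElem]
  rw [hdrop] at hequiv
  have hW := ct_W hsim_irr hser_sub hequiv
  simp only [W, List.map_cons, List.sum_cons, List.map_nil, List.sum_nil] at hW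
  omega

theorem maxconc_zero (hsim_irr : ∀ a, ¬ sim a a) (hser_sub : ∀ a b, ser a b → sim a b)
    {s : List (Finset E)} (hs : IsStepSeq sim s) (hc : Canonical sim ser s)
    (hne : s ≠ []) : MaxConcAt sim ser s 0 := by
  cases s with
  | nil => exact absurd rfl hne
  | cons X x' =>
    refine ⟨by simp, ?_⟩
    intro B y hB hy hequiv
    rw [List.drop_zero] at hequiv
    exact Finset.card_le_card (canonical_head_max hsim_irr hser_sub hs hc hequiv)

theorem mcIdx_zero (hsim_irr : ∀ a, ¬ sim a a) (hser_sub : ∀ a b, ser a b → sim a b)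
    {s : List (Finset E)} (hs : IsStepSeq sim s) (hc : Canonical sim ser s)
    (hne : s ≠ []) : mcIdx sim ser s = 0 :=
  Nat.sInf_eq_zero.mpr (Or.inl (maxconc_zero hsim_irr hser_sub hs hc hne))

end CTAux

theorem stmt10' [DecidableEq E] [Fintype E] (sim ser : E → E → Prop)
    (hsim_irr : ∀ a, ¬ sim a a) (hsim_symm : ∀ a b, sim a b → sim b a)
    (hser_sub : ∀ a b, ser a b → sim a b)
    (u : List (Finset E)) (hu : IsStepSeq sim u) :
    MaximallyConcurrent sim ser u ↔ Canonical sim ser u := by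
  open CTAux in
  constructor
  · rintro ⟨h1, h2⟩
    by_contra hnc
    obtain ⟨p, A, B, q, rfl, hAB⟩ := not_chain'_decomp hnc
    have hFD : FD sim ser A B := not_not.mp hAB
    set s : List (Finset E) := A :: B :: q with hs_def
    have hp : IsStepSeq sim p := fun X hX => hu X (by simp [hX])
    have hs : IsStepSeq sim s := fun X hX => hu X (List.mem_append.mpr (Or.inr hX))
    have hus : (p ++ s).drop p.length = s := List.drop_left
    obtain ⟨c, hcss, hccan, hceq⟩ := exists_canonical hsim_irr hsim_symm hser_sub hs
    have hclen_le : c.length ≤ s.length :=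
      canonical_min_length hsim_irr hser_sub hcss hccan hceq
    have hslen_le : s.length ≤ c.length := by
      have hueq : CTEquiv sim ser (p ++ s) (p ++ c) := ct_append_left hp hceq
      have hpc : IsStepSeq sim (p ++ c) := by
        intro X hX
        rcases List.mem_append.mp hX with h | h
        · exact hp X h
        · exact hcss X h
      have := h1 (p ++ c) hpc hueq
      simp only [List.length_append] at this
      omega
    have hclen : c.length = s.length := le_antisymm hclen_le hslen_le
    have hsne : s ≠ [] := by simp [hs_def]
    have hcne : c ≠ [] := by
      intro h
      exact hsne ((ct_ne_nil hceq).mpr h)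
    have hmc0 : mcIdx sim ser c = 0 := mcIdx_zero hsim_irr hser_sub hcss hccan hcne
    have hset_ne : {j | MaxConcAt sim ser s j}.Nonempty :=
      ⟨s.length - 1, maxconc_last hsim_irr hser_sub hsne⟩
    have h0 : ¬ MaxConcAt sim ser s 0 := by
      rintro ⟨h, hmax⟩
      obtain ⟨C, hCstep, hCB, hser1, hser2⟩ := hFD
      have hstep : Rstep ser s ((A ∪ C) :: (sdl B C ++ q)) := by
        have := mk (ser := ser) (p := []) (q := q) (A := A) (B := B) (C := C)
          hCstep.1 hCB hser1 hser2
        simpa [hs_def] using this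
      have hts : IsStepSeq sim ((A ∪ C) :: (sdl B C ++ q)) :=
        rstep_stepseq hsim_symm hser_sub hstep hs
      have hv : CTEquiv sim ser ((A ∪ C) :: (sdl B C ++ q)) s :=
        ct_symm (rstep_ctequiv hsim_symm hser_sub hstep hs)
      have hcard := hmax (A ∪ C) (sdl B C ++ q) (hts _ (by simp))
        (fun X hX => hts X (by simp [hX])) (by rwa [List.drop_zero])
      have hget : s.get ⟨0, h⟩ = A := rfl
      rw [hget] at hcard
      have hdisj : Disjoint A C := SR.disj hsim_irr hser_sub hser1
      rw [Finset.card_union_of_disjoint hdisj] at hcard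
      have := Finset.card_pos.mpr hCstep.1
      omega
    have h1idx : 1 ≤ mcIdx sim ser s := by
      rcases Nat.eq_zero_or_pos (mcIdx sim ser s) with h' | h'
      · rcases Nat.sInf_eq_zero.mp h' with h'' | h''
        · exact absurd h'' h0
        · exact absurd h'' (Set.Nonempty.ne_empty hset_ne)
      · exact h'
    have hfin := h2 p.length (by simp [hs_def]) c hcss (by rw [hus]; exact hceq)
      (by rw [hus]; exact hclen.symm)
    rw [hus] at hfin
    omega
  · intro hc
    constructor
    · intro v hv hequiv
      exact canonical_min_length hsim_irr hser_sub hu hc (ct_symm hequiv)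
    · intro i hi w hw hequiv hlen
      have hsuffc : Canonical sim ser (u.drop i) := hc.drop i
      have hsuffs : IsStepSeq sim (u.drop i) :=
        fun X hX => hu X (List.drop_subset i u hX)
      have hne : u.drop i ≠ [] := by
        intro h
        have := (List.length_drop : (u.drop i).length = u.length - i)
        rw [h] at this
        simp at this
        omega
      rw [mcIdx_zero hsim_irr hser_sub hsuffs hsuffc hne]
      exact Nat.zero_le _

/-- A step sequence is maximally concurrent iff it is canonical. -/
theorem stmt10 [DecidableEq E] [Fintype E] (sim ser : E → E → Prop)
    (hsim_irr : ∀ a, ¬ sim a a) (hsim_symm : ∀ a b, sim a b → sim b a)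
    (hser_sub : ∀ a b, ser a b → sim a b)
    (u : List (Finset E)) (hu : IsStepSeq sim u) :
    MaximallyConcurrent sim ser u ↔ Canonical sim ser u :=
  stmt10' sim ser hsim_irr hsim_symm hser_sub u hu
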